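/- Let R be a Dedekind domain with fraction field K, M an R[x₁,...,xₙ]-module, and (v_i, 𝔞_i) for 1 ≤ i ≤ l pseudo-elements of M such that the R[x]-submodule generated by the sets 𝔞_i v_i equals M. Then for any pseudo-element (v, 𝔞) of M, there exist polynomials f_i ∈ (𝔞_i 𝔞⁻¹)[x] such that v = Σ_i f_i v_i. -/

import Mathlib

open MvPolynomial

attribute [local instance] MvPolynomial.algebraMvPolynomial

/-- Let `R` be a Dedekind domain with fraction field `K`, `M` an
`R[x₁,…,xₙ]`-module (realized as an `R[x]`-submodule of a `K[x]`-module `V`), and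
`(vᵢ, 𝔞ᵢ)` pseudo-elements of `M` such that the `R[x]`-submodule generated by the
sets `𝔞ᵢ vᵢ` equals `M`. Then for any pseudo-element `(v, 𝔞)` of `M` there exist
polynomials `fᵢ ∈ (𝔞ᵢ 𝔞⁻¹)[x]` with `v = ∑ᵢ fᵢ vᵢ`. -/
theorem stmt1 {R : Type*} [CommRing R] [IsDomain R] [IsDedekindDomain R]
    {n l : ℕ} {V : Type*} [AddCommGroup V]
    [Module (MvPolynomial (Fin n) (FractionRing R)) V]
    [Module (MvPolynomial (Fin n) R) V]
    [IsScalarTower (MvPolynomial (Fin n) R) (MvPolynomial (Fin n) (FractionRing R)) V]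
    (M : Submodule (MvPolynomial (Fin n) R) V)
    (vi : Fin l → V)
    (𝔞i : Fin l → FractionalIdeal (nonZeroDivisors R) (FractionRing R))
    (h𝔞i : ∀ i, 𝔞i i ≠ 0)
    (hvi : ∀ i, ∀ a ∈ 𝔞i i, (C a : MvPolynomial (Fin n) (FractionRing R)) • vi i ∈ M)
    (hgen : M = Submodule.span (MvPolynomial (Fin n) R)
      (⋃ i, {x : V | ∃ c ∈ 𝔞i i, x = (C c : MvPolynomial (Fin n) (FractionRing R)) • vi i}))
    (v : V) (𝔞 : FractionalIdeal (nonZeroDivisors R) (FractionRing R)) (h𝔞 : 𝔞 ≠ 0)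
    (hv : ∀ a ∈ 𝔞, (C a : MvPolynomial (Fin n) (FractionRing R)) • v ∈ M) :
    ∃ f : Fin l → MvPolynomial (Fin n) (FractionRing R),
      (∀ i, ∀ d, (f i).coeff d ∈ 𝔞i i * 𝔞⁻¹) ∧ v = ∑ i, f i • vi i := by
  classical
  set K := FractionRing R with hK
  have hz : ∀ J : FractionalIdeal (nonZeroDivisors R) K, (0:K) ∈ J :=
    fun J => FractionalIdeal.mem_coe.mp (zero_mem _)
  have hadd : ∀ (J : FractionalIdeal (nonZeroDivisors R) K) (x y : K),
      x ∈ J → y ∈ J → x + y ∈ J := fun J x y hx hy =>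
    FractionalIdeal.mem_coe.mp (add_mem (FractionalIdeal.mem_coe.mpr hx)
      (FractionalIdeal.mem_coe.mpr hy))
  have hsmul : ∀ (J : FractionalIdeal (nonZeroDivisors R) K) (r : R) (x : K),
      x ∈ J → r • x ∈ J := fun J r x hx =>
    FractionalIdeal.mem_coe.mp (Submodule.smul_mem _ r (FractionalIdeal.mem_coe.mpr hx))
  -- the set of elements expressible as ∑ gᵢ • vᵢ with gᵢ ∈ 𝔞ᵢ[x]
  let P : Submodule (MvPolynomial (Fin n) R) V :=
  { carrier := {w | ∃ g : Fin l → MvPolynomial (Fin n) K,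
      (∀ i d, (g i).coeff d ∈ 𝔞i i) ∧ w = ∑ i, g i • vi i}
    zero_mem' := ⟨0, fun i d => by simpa using hz (𝔞i i), by simp⟩
    add_mem' := by
      rintro a b ⟨g, hg, rfl⟩ ⟨g', hg', rfl⟩
      refine ⟨g + g', fun i d => ?_, ?_⟩
      · simpa using hadd _ _ _ (hg i d) (hg' i d)
      · simp [add_smul, Finset.sum_add_distrib]
    smul_mem' := by
      rintro p w ⟨g, hg, rfl⟩
      refine ⟨fun i => p • g i, fun i d => ?_, ?_⟩
      · show coeff d (p • g i) ∈ 𝔞i i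
        rw [Algebra.smul_def, MvPolynomial.algebraMap_def, MvPolynomial.coeff_mul]
        refine Submodule.sum_mem _ fun x _ => ?_
        rw [MvPolynomial.coeff_map, ← Algebra.smul_def]
        exact hsmul _ _ _ (hg i x.2)
      · rw [Finset.smul_sum]
        exact Finset.sum_congr rfl fun i _ => (smul_assoc p (g i) (vi i)).symm }
  have hMP : M ≤ P := by
    rw [hgen]
    refine Submodule.span_le.mpr ?_
    rintro w hw
    simp only [Set.mem_iUnion, Set.mem_setOf_eq] at hw
    obtain ⟨i, c, hc, rfl⟩ := hw
    refine ⟨fun j => if j = i then C c else 0, fun j d => ?_, ?_⟩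
    · by_cases h : j = i
      · subst h
        show coeff d (if (j:Fin l) = j then C c else 0) ∈ 𝔞i j
        rw [if_pos rfl, MvPolynomial.coeff_C]
        split_ifs
        · exact hc
        · exact hz _
      · show coeff d (if j = i then C c else 0) ∈ 𝔞i j
        rw [if_neg h]
        simpa using hz (𝔞i j)
    · rw [Finset.sum_eq_single i (fun j _ hj => by simp [hj]) (by simp)]
      simp
  have key : ∀ t ∈ 𝔞 * 𝔞⁻¹, ∃ f : Fin l → MvPolynomial (Fin n) K,
      (∀ i d, (f i).coeff d ∈ 𝔞i i * 𝔞⁻¹) ∧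
      (C t : MvPolynomial (Fin n) K) • v = ∑ i, f i • vi i := by
    intro t ht
    refine FractionalIdeal.mul_induction_on ht ?_ ?_
    · intro a ha b hb
      obtain ⟨g, hg, hgv⟩ := hMP (hv a ha)
      refine ⟨fun i => C b * g i, fun i d => ?_, ?_⟩
      · rw [MvPolynomial.coeff_C_mul, mul_comm b]
        exact FractionalIdeal.mul_mem_mul (hg i d) hb
      · have : (C (a * b) : MvPolynomial (Fin n) K) = C b * C a := by
          rw [MvPolynomial.C_mul, mul_comm]
        rw [this, mul_smul, hgv, Finset.smul_sum]
        exact Finset.sum_congr rfl fun i _ => (mul_smul (C b) (g i) (vi i)).symm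
    · rintro x y ⟨f, hf, hx⟩ ⟨f', hf', hy⟩
      refine ⟨f + f', fun i d => by simpa using hadd _ _ _ (hf i d) (hf' i d), ?_⟩
      rw [MvPolynomial.C_add, add_smul, hx, hy, ← Finset.sum_add_distrib]
      exact Finset.sum_congr rfl fun i _ => (add_smul (f i) (f' i) (vi i)).symm
  obtain ⟨f, hf, hfv⟩ := key 1 (by
    rw [mul_inv_cancel₀ h𝔞]; exact FractionalIdeal.one_mem_one _)
  exact ⟨f, hf, by simpa using hfv⟩
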